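/- arXiv:1312.5152 — 2 statements merged into one kernel-verified Lean document; each statement's English description precedes it below -/
import Mathlib

section
/- Let n ≥ 3 and 1 ≤ k ≤ (n−1)/2 be integers, let ε ∈ {−1, 0, 1}, and let h be a real symmetric (n−1)×(n−1) matrix with eigenvalues λ = (λ_1, …, λ_{n−1}) counted with multiplicity. For indices in {1, …, n−1} define R_{i_1 i_2}^{j_1 j_2} = (h_{i_1 j_1} h_{i_2 j_2} − h_{i_1 j_2} h_{i_2 j_1}) + ε (δ_{i_1 j_1} δ_{i_2 j_2} − δ_{i_1 j_2} δ_{i_2 j_1}), where δ is the ordinary Kronecker delta. Then (1/2^k) Σ δ^{i_1 i_2 ⋯ i_{2k}}_{j_1 j_2 ⋯ j_{2k}} · R_{i_1 i_2}^{j_1 j_2} ⋯ R_{i_{2k−1} i_{2k}}^{j_{2k−1} j_{2k}}, the sum running over all i_1, …, i_{2k}, j_1, …, j_{2k} ∈ {1, …, n−1}, equals C(n−1,2k) · (2k)! · Σ_{i=0}^{k} C(k,i) ε^i H_{2k−2i}(λ). -/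
/-- The `k`-th elementary symmetric polynomial of `x ∈ ℝ^m`
(`σ_0 = 1`, `σ_k = 0` for `k > m`). -/
noncomputable def esymmR (m : ℕ) (x : Fin m → ℝ) (k : ℕ) : ℝ :=
  ∑ s ∈ Finset.powersetCard k (Finset.univ : Finset (Fin m)), ∏ i ∈ s, x i

/-- The normalized `k`-th elementary symmetric function `H_k = σ_k / C(m,k)`
(`H_0 = 1`, `H_k = 0` for `k > m`). -/
noncomputable def Hnorm (m : ℕ) (x : Fin m → ℝ) (k : ℕ) : ℝ :=
  esymmR m x k / (m.choose k : ℝ)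

/-- The point of `ℝ^{m-1}` obtained from `x ∈ ℝ^m` by deleting the `p`-th coordinate. -/
def deleteCoord {m : ℕ} (x : Fin m → ℝ) (p : Fin m) : Fin (m - 1) → ℝ :=
  fun i => if (i : ℕ) < (p : ℕ) then x ⟨(i : ℕ), by have := i.isLt; omega⟩
           else x ⟨(i : ℕ) + 1, by have := i.isLt; omega⟩

/-- The ordinary Kronecker delta on `Fin N`, as a real number. -/
def kdelta {N : ℕ} (i j : Fin N) : ℝ := if i = j then 1 else 0

/-- The generalized Kronecker delta `δ^{i_1 ⋯ i_r}_{j_1 ⋯ j_r}`: the determinant of the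
`r × r` matrix whose `(a,b)`-entry is `1` if `i a = j b` and `0` otherwise. -/
noncomputable def genKron {N r : ℕ} (i j : Fin r → Fin N) : ℝ :=
  Matrix.det (Matrix.of fun a b : Fin r => kdelta (i a) (j b))


section GBAux
open Finset

lemma genKron_comp_swap {N r : ℕ} (i j : Fin r → Fin N) (p q : Fin r) (hpq : p ≠ q) :
    genKron i (j ∘ Equiv.swap p q) = - genKron i j := by
  unfold genKron
  have : (Matrix.of fun a b : Fin r => kdelta (i a) ((j ∘ Equiv.swap p q) b))
      = (Matrix.of fun a b : Fin r => kdelta (i a) (j b)).submatrix id (Equiv.swap p q) := rfl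
  rw [this, Matrix.det_permute', Equiv.Perm.sign_swap hpq]
  simp

lemma genKron_self {N r : ℕ} (u : Fin r → Fin N) :
    genKron u u = if Function.Injective u then 1 else 0 := by
  split_ifs with h
  · have : (Matrix.of fun a b : Fin r => kdelta (u a) (u b)) = 1 := by
      ext a b
      simp [kdelta, Matrix.one_apply, h.eq_iff]
    rw [genKron, this, Matrix.det_one]
  · obtain ⟨a, b, hab, hne⟩ : ∃ a b, u a = u b ∧ a ≠ b := by
      simp only [Function.Injective, not_forall] at h
      obtain ⟨a, b, hab, hne⟩ := h
      exact ⟨a, b, hab, hne⟩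
    exact Matrix.det_zero_of_row_eq hne (by funext c; simp [kdelta, hab])

lemma det_rows_sum {r N : ℕ} (v : Fin r → Fin N → ℝ) (M : Fin N → Fin r → ℝ) :
    ∑ i : Fin r → Fin N, (∏ s, v s (i s)) * Matrix.det (Matrix.of fun a b => M (i a) b)
      = Matrix.det (Matrix.of fun a b => ∑ p, v a p * M p b) := by
  classical
  have h1 := (Matrix.detRowAlternating (R := ℝ) (n := Fin r)).toMultilinearMap.map_sum
    (g := fun a p => v a p • M p)
  have h2 : ∀ i : Fin r → Fin N,
      (Matrix.detRowAlternating (R := ℝ) (n := Fin r)).toMultilinearMap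
        (fun a => v a (i a) • M (i a))
      = (∏ s, v s (i s)) * Matrix.det (Matrix.of fun a b => M (i a) b) := by
    intro i
    rw [MultilinearMap.map_smul_univ]
    rfl
  have h3 : (fun a => ∑ p : Fin N, v a p • M p)
      = fun a => (Matrix.of fun a b => ∑ p, v a p * M p b) a := by
    funext a; funext b
    simp [Finset.sum_apply]
  calc ∑ i : Fin r → Fin N, (∏ s, v s (i s)) * Matrix.det (Matrix.of fun a b => M (i a) b)
      = ∑ i : Fin r → Fin N, (Matrix.detRowAlternating (R := ℝ) (n := Fin r)).toMultilinearMap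
          (fun a => v a (i a) • M (i a)) := by
        refine Finset.sum_congr rfl fun i _ => (h2 i).symm
    _ = (Matrix.detRowAlternating (R := ℝ) (n := Fin r)).toMultilinearMap
          (fun a => ∑ p : Fin N, v a p • M p) := h1.symm
    _ = Matrix.det (Matrix.of fun a b => ∑ p, v a p * M p b) := by rw [h3]; rfl

lemma master {N r : ℕ} (O : Matrix (Fin N) (Fin N) ℝ) (hO : Matrix.transpose O * O = 1)
    (d : Fin r → Fin N → ℝ) :
    ∑ i : Fin r → Fin N, ∑ j : Fin r → Fin N, genKron i j *
        ∏ s, (Matrix.transpose O * Matrix.diagonal (d s) * O) (i s) (j s)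
      = ∑ u : Fin r → Fin N, genKron u u * ∏ s, d s (u s) := by
  classical
  have hO' : O * Matrix.transpose O = 1 := mul_eq_one_comm.mp hO
  have hentry : ∀ (s : Fin r) (p q : Fin N),
      (Matrix.transpose O * Matrix.diagonal (d s) * O) p q
        = ∑ u, d s u * (O u p * O u q) := by
    intro s p q
    rw [Matrix.mul_apply]
    congr 1
    funext u
    rw [Matrix.mul_diagonal]
    simp [Matrix.transpose_apply]
    ring
  -- expand the product over s
  have hexp : ∀ i j : Fin r → Fin N,
      ∏ s, (Matrix.transpose O * Matrix.diagonal (d s) * O) (i s) (j s)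
        = ∑ u : Fin r → Fin N, ∏ s, (d s (u s) * (O (u s) (i s) * O (u s) (j s))) := by
    intro i j
    calc ∏ s, (Matrix.transpose O * Matrix.diagonal (d s) * O) (i s) (j s)
        = ∏ s, ∑ u, d s u * (O u (i s) * O u (j s)) := by
          refine Finset.prod_congr rfl fun s _ => hentry s (i s) (j s)
      _ = ∑ u : Fin r → Fin N, ∏ s, (d s (u s) * (O (u s) (i s) * O (u s) (j s))) :=
          Fintype.prod_sum (fun s u => d s u * (O u (i s) * O u (j s)))
  -- key inner computation for fixed u
  have hkey : ∀ u : Fin r → Fin N,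
      ∑ i : Fin r → Fin N, ∑ j : Fin r → Fin N,
        genKron i j * ((∏ s, O (u s) (i s)) * ∏ s, O (u s) (j s))
      = genKron u u := by
    intro u
    have stepA : ∀ j : Fin r → Fin N,
        ∑ i : Fin r → Fin N, (∏ s, O (u s) (i s)) * genKron i j
          = Matrix.det (Matrix.of fun a b => O (u a) (j b)) := by
      intro j
      have h := det_rows_sum (fun s p => O (u s) p) (fun p => fun b => kdelta p (j b))
      have e1 : (Matrix.of fun a b : Fin r => ∑ p, O (u a) p * kdelta p (j b))
          = Matrix.of fun a b => O (u a) (j b) := by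
        funext a b
        simp [kdelta, mul_ite]
      rw [e1] at h
      simpa [genKron] using h
    have stepB :
        ∑ j : Fin r → Fin N, (∏ s, O (u s) (j s)) *
            Matrix.det (Matrix.of fun a b => O (u a) (j b))
          = genKron u u := by
      have hdt : ∀ j : Fin r → Fin N,
          Matrix.det (Matrix.of fun a b => O (u a) (j b))
            = Matrix.det (Matrix.of fun a b => O (u b) (j a)) := by
        intro j
        rw [← Matrix.det_transpose]
        rfl
      calc ∑ j : Fin r → Fin N, (∏ s, O (u s) (j s)) *
              Matrix.det (Matrix.of fun a b => O (u a) (j b))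
          = ∑ j : Fin r → Fin N, (∏ s, O (u s) (j s)) *
              Matrix.det (Matrix.of fun a b => O (u b) (j a)) := by
            refine Finset.sum_congr rfl fun j _ => by rw [hdt j]
        _ = Matrix.det (Matrix.of fun a b => ∑ p, O (u a) p * O (u b) p) :=
            det_rows_sum (fun s p => O (u s) p) (fun p => fun b => O (u b) p)
        _ = genKron u u := by
            have : (Matrix.of fun a b : Fin r => ∑ p, O (u a) p * O (u b) p)
                = Matrix.of fun a b : Fin r => kdelta (u a) (u b) := by
              funext a b
              have : ∑ p, O (u a) p * O (u b) p = (O * Matrix.transpose O) (u a) (u b) := by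
                rw [Matrix.mul_apply]; rfl
              simp only [Matrix.of_apply]
              rw [this, hO']
              simp [Matrix.one_apply, kdelta]
            rw [genKron, this]
    calc ∑ i : Fin r → Fin N, ∑ j : Fin r → Fin N,
          genKron i j * ((∏ s, O (u s) (i s)) * ∏ s, O (u s) (j s))
        = ∑ j : Fin r → Fin N, ∑ i : Fin r → Fin N,
          (∏ s, O (u s) (j s)) * ((∏ s, O (u s) (i s)) * genKron i j) := by
          rw [Finset.sum_comm]
          refine Finset.sum_congr rfl fun j _ => Finset.sum_congr rfl fun i _ => by ring
      _ = ∑ j : Fin r → Fin N, (∏ s, O (u s) (j s)) *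
            Matrix.det (Matrix.of fun a b => O (u a) (j b)) := by
          refine Finset.sum_congr rfl fun j _ => by rw [← Finset.mul_sum, stepA j]
      _ = genKron u u := stepB
  calc ∑ i : Fin r → Fin N, ∑ j : Fin r → Fin N, genKron i j *
        ∏ s, (Matrix.transpose O * Matrix.diagonal (d s) * O) (i s) (j s)
      = ∑ i : Fin r → Fin N, ∑ j : Fin r → Fin N, ∑ u : Fin r → Fin N,
          (∏ s, d s (u s)) * (genKron i j * ((∏ s, O (u s) (i s)) * ∏ s, O (u s) (j s))) := by
        refine Finset.sum_congr rfl fun i _ => Finset.sum_congr rfl fun j _ => ?_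
        rw [hexp i j, Finset.mul_sum]
        refine Finset.sum_congr rfl fun u _ => ?_
        rw [Finset.prod_mul_distrib, Finset.prod_mul_distrib]
        ring
    _ = ∑ u : Fin r → Fin N, (∏ s, d s (u s)) * ∑ i : Fin r → Fin N, ∑ j : Fin r → Fin N,
          genKron i j * ((∏ s, O (u s) (i s)) * ∏ s, O (u s) (j s)) := by
        have e2 : ∀ i : Fin r → Fin N, (∑ j : Fin r → Fin N, ∑ u : Fin r → Fin N,
            (∏ s, d s (u s)) * (genKron i j * ((∏ s, O (u s) (i s)) * ∏ s, O (u s) (j s))))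
            = ∑ u : Fin r → Fin N, ∑ j : Fin r → Fin N,
            (∏ s, d s (u s)) * (genKron i j * ((∏ s, O (u s) (i s)) * ∏ s, O (u s) (j s))) :=
          fun i => Finset.sum_comm
        simp_rw [e2]
        rw [Finset.sum_comm]
        refine Finset.sum_congr rfl fun u _ => ?_
        simp_rw [← Finset.mul_sum]
    _ = ∑ u : Fin r → Fin N, genKron u u * ∏ s, d s (u s) := by
        refine Finset.sum_congr rfl fun u _ => by rw [hkey u]; ring

def pfst {k : ℕ} (a : Fin k) : Fin (2 * k) := ⟨2 * a.val, by have := a.isLt; omega⟩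
def psnd {k : ℕ} (a : Fin k) : Fin (2 * k) := ⟨2 * a.val + 1, by have := a.isLt; omega⟩

lemma pfst_ne_psnd {k : ℕ} (a : Fin k) : pfst a ≠ psnd a := by
  simp [pfst, psnd, Fin.ext_iff]

lemma swap_ne {k : ℕ} {a b : Fin k} (hab : a ≠ b) :
    ∀ x ∈ ({pfst a, psnd a} : Set (Fin (2*k))),
      Equiv.swap (pfst b) (psnd b) x = x := by
  intro x hx
  have hval : a.val ≠ b.val := fun h => hab (Fin.ext h)
  refine Equiv.swap_apply_of_ne_of_ne ?_ ?_ <;>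
  · rcases hx with h | h <;> subst h <;>
    · simp only [pfst, psnd, ne_eq, Fin.mk.injEq]
      omega

lemma antisym {N k : ℕ} (i : Fin (2 * k) → Fin N)
    (Z : Fin k → (Fin (2 * k) → Fin N) → ℝ)
    (hZ : ∀ a (j j' : Fin (2*k) → Fin N), j (pfst a) = j' (pfst a) →
      j (psnd a) = j' (psnd a) → Z a j = Z a j')
    (B : Finset (Fin k)) :
    ∑ j : Fin (2 * k) → Fin N, genKron i j *
        ((∏ a ∈ B, (Z a j - Z a (j ∘ Equiv.swap (pfst a) (psnd a)))) * ∏ a ∈ Bᶜ, Z a j)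
      = 2 ^ B.card * ∑ j : Fin (2 * k) → Fin N, genKron i j * ∏ a, Z a j := by
  classical
  induction B using Finset.induction_on with
  | empty => simp
  | @insert b s hb ih =>
    set swb := Equiv.swap (pfst b) (psnd b) with hswb
    have hswap_fst : ∀ a : Fin k, a ≠ b → swb (pfst a) = pfst a := fun a h =>
      swap_ne h _ (Or.inl rfl)
    have hswap_snd : ∀ a : Fin k, a ≠ b → swb (psnd a) = psnd a := fun a h =>
      swap_ne h _ (Or.inr rfl)
    have hZinv : ∀ a : Fin k, a ≠ b → ∀ j : Fin (2*k) → Fin N,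
        Z a (j ∘ swb) = Z a j := by
      intro a hab j
      apply hZ
      · simp [Function.comp, hswap_fst a hab]
      · simp [Function.comp, hswap_snd a hab]
    have hDinv : ∀ a : Fin k, a ≠ b → ∀ j : Fin (2*k) → Fin N,
        Z a (j ∘ swb ∘ Equiv.swap (pfst a) (psnd a)) = Z a (j ∘ Equiv.swap (pfst a) (psnd a)) := by
      intro a hab j
      apply hZ
      · simp [Function.comp, Equiv.swap_apply_left, hswap_snd a hab]
      · simp [Function.comp, Equiv.swap_apply_right, hswap_fst a hab]
    set W : (Fin (2*k) → Fin N) → ℝ := fun j =>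
      (∏ a ∈ s, (Z a j - Z a (j ∘ Equiv.swap (pfst a) (psnd a)))) *
        ∏ a ∈ (insert b s)ᶜ, Z a j with hW
    have hWinv : ∀ j : Fin (2*k) → Fin N, W (j ∘ swb) = W j := by
      intro j
      simp only [hW]
      congr 1
      · refine Finset.prod_congr rfl fun a ha => ?_
        have hab : a ≠ b := fun h => hb (h ▸ ha)
        rw [hZinv a hab j]
        congr 1
        have : (j ∘ swb) ∘ Equiv.swap (pfst a) (psnd a) = j ∘ swb ∘ Equiv.swap (pfst a) (psnd a) := rfl
        rw [this, hDinv a hab j]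
      · refine Finset.prod_congr rfl fun a ha => ?_
        have hab : a ≠ b := by
          intro h
          subst h
          exact (Finset.mem_compl.mp ha) (Finset.mem_insert_self a s)
        exact hZinv a hab j
    have split : ∀ j : Fin (2*k) → Fin N,
        genKron i j * ((∏ a ∈ insert b s, (Z a j - Z a (j ∘ Equiv.swap (pfst a) (psnd a)))) *
          ∏ a ∈ (insert b s)ᶜ, Z a j)
        = genKron i j * (Z b j * W j) - genKron i j * (Z b (j ∘ swb) * W j) := by
      intro j
      rw [Finset.prod_insert hb]
      simp only [hW]
      ring
    have reidx : ∑ j : Fin (2*k) → Fin N, genKron i j * (Z b (j ∘ swb) * W j)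
        = - ∑ j : Fin (2*k) → Fin N, genKron i j * (Z b j * W j) := by
      have hinvol : Function.Involutive (fun j : Fin (2*k) → Fin N => j ∘ swb) := by
        intro j
        funext x
        simp [Function.comp, hswb, Equiv.swap_apply_self]
      have := Fintype.sum_bijective (fun j : Fin (2*k) → Fin N => j ∘ swb) hinvol.bijective
        (fun j => genKron i j * (Z b (j ∘ swb) * W j))
        (fun j => - (genKron i j * (Z b j * W j)))
        (fun j => by
          have h1 : genKron i (j ∘ swb) = - genKron i j :=
            genKron_comp_swap i j _ _ (pfst_ne_psnd b)
          simp only [h1, hWinv]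
          ring)
      rw [this, Finset.sum_neg_distrib]
    have hZWprod : ∀ j : Fin (2*k) → Fin N,
        Z b j * W j = (∏ a ∈ s, (Z a j - Z a (j ∘ Equiv.swap (pfst a) (psnd a)))) *
          ∏ a ∈ sᶜ, Z a j := by
      intro j
      have hbc : b ∉ (insert b s)ᶜ := by simp
      have : (sᶜ : Finset (Fin k)) = insert b (insert b s)ᶜ := by
        rw [Finset.compl_insert, Finset.insert_erase (Finset.mem_compl.mpr hb)]
      rw [this, Finset.prod_insert hbc]
      simp only [hW]
      ring
    calc ∑ j : Fin (2*k) → Fin N, genKron i j *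
          ((∏ a ∈ insert b s, (Z a j - Z a (j ∘ Equiv.swap (pfst a) (psnd a)))) *
            ∏ a ∈ (insert b s)ᶜ, Z a j)
        = ∑ j : Fin (2*k) → Fin N,
            (genKron i j * (Z b j * W j) - genKron i j * (Z b (j ∘ swb) * W j)) :=
          Finset.sum_congr rfl fun j _ => split j
      _ = 2 * ∑ j : Fin (2*k) → Fin N, genKron i j * (Z b j * W j) := by
          rw [Finset.sum_sub_distrib, reidx]
          ring
      _ = 2 * ∑ j : Fin (2*k) → Fin N, genKron i j *
            ((∏ a ∈ s, (Z a j - Z a (j ∘ Equiv.swap (pfst a) (psnd a)))) * ∏ a ∈ sᶜ, Z a j) := by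
          congr 1
          exact Finset.sum_congr rfl fun j _ => by rw [hZWprod j]
      _ = 2 ^ (insert b s).card * ∑ j : Fin (2*k) → Fin N, genKron i j * ∏ a, Z a j := by
          rw [ih, Finset.card_insert_of_notMem hb]
          ring

lemma esymm_erase {α : Type*} [DecidableEq α] (w : α → ℝ) (s : Finset α) (t : ℕ) :
    ∑ a ∈ s, w a * ∑ A ∈ (s.erase a).powersetCard t, ∏ x ∈ A, w x
      = ((t : ℝ) + 1) * ∑ B ∈ s.powersetCard (t + 1), ∏ x ∈ B, w x := by
  classical
  have lhs_eq : ∑ a ∈ s, w a * ∑ A ∈ (s.erase a).powersetCard t, ∏ x ∈ A, w x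
      = ∑ p ∈ s.sigma (fun a => (s.erase a).powersetCard t), ∏ x ∈ insert p.1 p.2, w x := by
    rw [Finset.sum_sigma]
    refine Finset.sum_congr rfl fun a ha => ?_
    rw [Finset.mul_sum]
    refine Finset.sum_congr rfl fun A hA => ?_
    have haA : a ∉ A := by
      intro h
      have := (Finset.mem_powersetCard.mp hA).1 h
      exact (Finset.notMem_erase a s) this
    rw [Finset.prod_insert haA]
  have rhs_eq : ∑ p ∈ (s.powersetCard (t+1)).sigma (fun B => B), (∏ x ∈ p.1, w x)
      = ((t : ℝ) + 1) * ∑ B ∈ s.powersetCard (t + 1), ∏ x ∈ B, w x := by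
    rw [Finset.sum_sigma, Finset.mul_sum]
    refine Finset.sum_congr rfl fun B hB => ?_
    dsimp only
    rw [Finset.sum_const, (Finset.mem_powersetCard.mp hB).2, nsmul_eq_mul]
    push_cast
    ring
  rw [lhs_eq, ← rhs_eq]
  refine Finset.sum_nbij' (fun p => ⟨insert p.1 p.2, p.1⟩) (fun q => ⟨q.2, q.1.erase q.2⟩)
    ?_ ?_ ?_ ?_ ?_
  · rintro ⟨a, A⟩ hp
    simp only [Finset.mem_sigma] at hp ⊢
    obtain ⟨ha, hA⟩ := hp
    obtain ⟨hAsub, hAcard⟩ := Finset.mem_powersetCard.mp hA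
    have haA : a ∉ A := fun h => (Finset.notMem_erase a s) (hAsub h)
    constructor
    · refine Finset.mem_powersetCard.mpr ⟨?_, ?_⟩
      · intro x hx
        rcases Finset.mem_insert.mp hx with h | h
        · exact h ▸ ha
        · exact Finset.mem_of_mem_erase (hAsub h)
      · rw [Finset.card_insert_of_notMem haA, hAcard]
    · exact Finset.mem_insert_self a A
  · rintro ⟨B, a⟩ hq
    simp only [Finset.mem_sigma] at hq ⊢
    obtain ⟨hB, haB⟩ := hq
    obtain ⟨hBsub, hBcard⟩ := Finset.mem_powersetCard.mp hB
    constructor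
    · exact hBsub haB
    · refine Finset.mem_powersetCard.mpr ⟨?_, ?_⟩
      · intro x hx
        obtain ⟨hxa, hxB⟩ := Finset.mem_erase.mp hx
        exact Finset.mem_erase.mpr ⟨hxa, hBsub hxB⟩
      · rw [Finset.card_erase_of_mem haB, hBcard]
        omega
  · rintro ⟨a, A⟩ hp
    simp only [Finset.mem_sigma] at hp
    obtain ⟨ha, hA⟩ := hp
    have haA : a ∉ A := fun h =>
      (Finset.notMem_erase a s) ((Finset.mem_powersetCard.mp hA).1 h)
    simp [Finset.erase_insert haA]
  · rintro ⟨B, a⟩ hq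
    simp only [Finset.mem_sigma] at hq
    simp [Finset.insert_erase hq.2]
  · rintro ⟨a, A⟩ _
    rfl

lemma injsum {α : Type*} [DecidableEq α] [Fintype α] (w : α → ℝ) :
    ∀ (r : ℕ) (m : ℕ) (s : Finset α), m ≤ r → r ≤ s.card →
    ∑ u ∈ Finset.univ.filter
        (fun u : Fin r → α => Function.Injective u ∧ ∀ x, u x ∈ s),
        ∏ x : Fin r, (if (x : ℕ) < m then w (u x) else 1)
      = (m.factorial : ℝ) * (((s.card - m).descFactorial (r - m) : ℕ) : ℝ) *
        ∑ A ∈ s.powersetCard m, ∏ x ∈ A, w x := by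
  intro r
  induction r with
  | zero =>
    intro m s hm _
    interval_cases m
    have : Finset.univ.filter
        (fun u : Fin 0 → α => Function.Injective u ∧ ∀ x, u x ∈ s) = Finset.univ := by
      refine Finset.filter_true_of_mem fun u _ => ⟨fun a => absurd a.isLt (by omega), fun x => absurd x.isLt (by omega)⟩
    rw [this]
    simp [Finset.powersetCard_zero]
  | succ r ih =>
    intro m s hm hcard
    -- re-index by peeling the first coordinate via Fin.cons
    have key : ∑ u ∈ Finset.univ.filter
        (fun u : Fin (r+1) → α => Function.Injective u ∧ ∀ x, u x ∈ s),
        ∏ x : Fin (r+1), (if (x : ℕ) < m then w (u x) else 1)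
      = ∑ a ∈ s, (if 0 < m then w a else 1) *
          ∑ v ∈ Finset.univ.filter
            (fun v : Fin r → α => Function.Injective v ∧ ∀ x, v x ∈ s.erase a),
            ∏ x : Fin r, (if (x : ℕ) + 1 < m then w (v x) else 1) := by
      have rhs : ∑ a ∈ s, (if 0 < m then w a else 1) *
          ∑ v ∈ Finset.univ.filter
            (fun v : Fin r → α => Function.Injective v ∧ ∀ x, v x ∈ s.erase a),
            ∏ x : Fin r, (if (x : ℕ) + 1 < m then w (v x) else 1)
          = ∑ p ∈ s.sigma (fun a => Finset.univ.filter
            (fun v : Fin r → α => Function.Injective v ∧ ∀ x, v x ∈ s.erase a)),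
            (if 0 < m then w p.1 else 1) * ∏ x : Fin r, (if (x : ℕ) + 1 < m then w (p.2 x) else 1) := by
        rw [Finset.sum_sigma]
        simp_rw [Finset.mul_sum]
      rw [rhs]
      refine Finset.sum_nbij' (fun u => ⟨u 0, fun x => u x.succ⟩)
        (fun p => Fin.cons p.1 p.2) ?_ ?_ ?_ ?_ ?_
      · intro u hu
        rw [Finset.mem_filter] at hu
        obtain ⟨-, hinj, hmem⟩ := hu
        refine Finset.mem_sigma.mpr ⟨hmem 0, Finset.mem_filter.mpr ⟨Finset.mem_univ _, ?_, ?_⟩⟩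
        · exact fun x y hxy => Fin.succ_injective r (hinj hxy)
        · intro x
          refine Finset.mem_erase.mpr ⟨fun h => ?_, hmem _⟩
          exact (Fin.succ_ne_zero x) (hinj h)
      · rintro ⟨a, v⟩ hp
        rw [Finset.mem_sigma, Finset.mem_filter] at hp
        obtain ⟨ha, -, hinj, hmem⟩ := hp
        refine Finset.mem_filter.mpr ⟨Finset.mem_univ _, ?_, ?_⟩
        · refine Fin.cons_injective_of_injective ?_ hinj
          rintro ⟨x, hx⟩
          exact (Finset.mem_erase.mp (hmem x)).1 hx
        · intro x
          refine Fin.cases ?_ ?_ x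
          · simpa using ha
          · intro y
            simpa using Finset.mem_of_mem_erase (hmem y)
      · intro u _
        exact Fin.cons_self_tail u
      · rintro ⟨a, v⟩ _
        simp
      · intro u _
        rw [Fin.prod_univ_succ]
        rfl
    rw [key]
    rcases Nat.eq_zero_or_pos m with hm0 | hmpos
    · subst hm0
      obtain ⟨c, hc⟩ : ∃ c, s.card = c + 1 :=
        ⟨s.card - 1, by omega⟩
      have step : ∀ a ∈ s,
          (if 0 < 0 then w a else 1) *
            ∑ v ∈ Finset.univ.filter
              (fun v : Fin r → α => Function.Injective v ∧ ∀ x, v x ∈ s.erase a),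
              ∏ x : Fin r, (if (x : ℕ) + 1 < 0 then w (v x) else 1)
          = (((s.card - 1).descFactorial r : ℕ) : ℝ) := by
        intro a ha
        have h1 : ∑ v ∈ Finset.univ.filter
              (fun v : Fin r → α => Function.Injective v ∧ ∀ x, v x ∈ s.erase a),
              ∏ x : Fin r, (if (x : ℕ) + 1 < 0 then w (v x) else 1)
            = ∑ v ∈ Finset.univ.filter
              (fun v : Fin r → α => Function.Injective v ∧ ∀ x, v x ∈ s.erase a),
              ∏ x : Fin r, (if (x : ℕ) < 0 then w (v x) else 1) := by
          refine Finset.sum_congr rfl fun v _ => Finset.prod_congr rfl fun x _ => by simp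
        rw [if_neg (by omega), one_mul, h1,
          ih 0 (s.erase a) (by omega) (by rw [Finset.card_erase_of_mem ha]; omega)]
        rw [Finset.card_erase_of_mem ha]
        simp [Finset.powersetCard_zero]
      rw [Finset.sum_congr rfl step, Finset.sum_const, nsmul_eq_mul]
      simp only [Finset.powersetCard_zero, Nat.factorial_zero, Nat.cast_one, one_mul]
      rw [Finset.sum_singleton, Finset.prod_empty]
      rw [hc]
      simp only [Nat.sub_zero, Nat.add_sub_cancel]
      rw [Nat.succ_descFactorial_succ]
      push_cast
      ring
    · obtain ⟨m', rfl⟩ : ∃ m', m = m' + 1 := ⟨m - 1, by omega⟩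
      have step : ∀ a ∈ s,
          (if 0 < m' + 1 then w a else 1) *
            ∑ v ∈ Finset.univ.filter
              (fun v : Fin r → α => Function.Injective v ∧ ∀ x, v x ∈ s.erase a),
              ∏ x : Fin r, (if (x : ℕ) + 1 < m' + 1 then w (v x) else 1)
          = (m'.factorial : ℝ) * (((s.card - 1 - m').descFactorial (r - m') : ℕ) : ℝ) *
              (w a * ∑ A ∈ (s.erase a).powersetCard m', ∏ x ∈ A, w x) := by
        intro a ha
        have h1 : ∑ v ∈ Finset.univ.filter
              (fun v : Fin r → α => Function.Injective v ∧ ∀ x, v x ∈ s.erase a),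
              ∏ x : Fin r, (if (x : ℕ) + 1 < m' + 1 then w (v x) else 1)
            = ∑ v ∈ Finset.univ.filter
              (fun v : Fin r → α => Function.Injective v ∧ ∀ x, v x ∈ s.erase a),
              ∏ x : Fin r, (if (x : ℕ) < m' then w (v x) else 1) := by
          refine Finset.sum_congr rfl fun v _ => Finset.prod_congr rfl fun x _ => by
            simp [Nat.succ_lt_succ_iff]
        rw [if_pos (by omega), h1,
          ih m' (s.erase a) (by omega) (by rw [Finset.card_erase_of_mem ha]; omega)]
        rw [Finset.card_erase_of_mem ha]
        ring
      rw [Finset.sum_congr rfl step, ← Finset.mul_sum, esymm_erase w s m']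
      have e1 : s.card - 1 - m' = s.card - (m' + 1) := by omega
      have e2 : r - m' = r + 1 - (m' + 1) := by omega
      rw [e1, e2, Nat.factorial_succ]
      push_cast
      ring

def halfIdx {k : ℕ} (s : Fin (2 * k)) : Fin k := ⟨s.val / 2, by have := s.isLt; omega⟩

def pairEquiv (k : ℕ) : Fin k × Fin 2 ≃ Fin (2 * k) where
  toFun p := ⟨2 * p.1.val + p.2.val, by have := p.1.isLt; have := p.2.isLt; omega⟩
  invFun s := (⟨s.val / 2, by have := s.isLt; omega⟩, ⟨s.val % 2, by omega⟩)
  left_inv := by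
    rintro ⟨a, b⟩
    have hb := b.isLt
    refine Prod.ext ?_ ?_ <;> · simp only []; ext; simp; omega
  right_inv := by
    rintro s
    ext
    simp
    omega

lemma halfIdx_pairEquiv {k : ℕ} (p : Fin k × Fin 2) : halfIdx (pairEquiv k p) = p.1 := by
  obtain ⟨a, b⟩ := p
  have hb := b.isLt
  ext
  simp [halfIdx, pairEquiv]
  omega

lemma halfIdx_pfst {k : ℕ} (a : Fin k) : halfIdx (pfst a) = a := by
  ext; simp only [halfIdx, pfst]; omega

lemma halfIdx_psnd {k : ℕ} (a : Fin k) : halfIdx (psnd a) = a := by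
  ext; simp only [halfIdx, psnd]; omega

lemma prod_pairs {k : ℕ} (f : Fin (2 * k) → ℝ) :
    ∏ s, f s = ∏ a : Fin k, (f (pfst a) * f (psnd a)) := by
  rw [← Equiv.prod_comp (pairEquiv k) f, Fintype.prod_prod_type]
  refine Finset.prod_congr rfl fun a _ => ?_
  rw [Fin.prod_univ_two]
  have h0 : pairEquiv k (a, 0) = pfst a := by ext; simp [pairEquiv, pfst]
  have h1 : pairEquiv k (a, 1) = psnd a := by ext; simp [pairEquiv, psnd]
  rw [h0, h1]

lemma card_filter_half {k : ℕ} (S : Finset (Fin k)) :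
    (Finset.univ.filter (fun s : Fin (2 * k) => halfIdx s ∈ S)).card = 2 * S.card := by
  classical
  rw [Finset.card_filter]
  rw [← Equiv.sum_comp (pairEquiv k) (fun s => if halfIdx s ∈ S then 1 else 0)]
  rw [Fintype.sum_prod_type]
  simp_rw [halfIdx_pairEquiv]
  simp only [Fin.sum_univ_two]
  rw [Finset.sum_add_distrib, Finset.sum_ite_mem]
  simp [two_mul]

lemma card_filter_lt {m t : ℕ} (ht : t ≤ m) :
    (Finset.univ.filter (fun s : Fin m => (s : ℕ) < t)).card = t := by
  classical
  have : (Finset.univ.filter (fun s : Fin m => (s : ℕ) < t))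
      = (Finset.range t).attachFin (fun x hx => lt_of_lt_of_le (Finset.mem_range.mp hx) ht) := by
    ext s
    simp [Finset.mem_attachFin]
  rw [this, Finset.card_attachFin, Finset.card_range]

lemma exists_slot_perm {k : ℕ} (S : Finset (Fin k)) :
    ∃ π : Equiv.Perm (Fin (2 * k)), ∀ s, (halfIdx s ∈ S ↔ ((π s : ℕ) < 2 * S.card)) := by
  classical
  have hSk : S.card ≤ k := by
    have h := Finset.card_le_univ S
    simpa using h
  have hcard : Fintype.card {s : Fin (2*k) // halfIdx s ∈ S}
      = Fintype.card {s : Fin (2*k) // (s : ℕ) < 2 * S.card} := by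
    rw [Fintype.card_subtype, Fintype.card_subtype, card_filter_half,
      card_filter_lt (by omega)]
  obtain ⟨e⟩ := Fintype.card_eq.mp hcard
  refine ⟨e.extendSubtype, fun s => ?_⟩
  constructor
  · intro hs
    exact e.extendSubtype_mem s hs
  · intro hs
    by_contra hmem
    exact (e.extendSubtype_not_mem s hmem) hs

lemma injsum_perm {N k : ℕ} (lam : Fin N → ℝ) (S : Finset (Fin k)) (h2k : 2 * k ≤ N) :
    ∑ u ∈ Finset.univ.filter (fun u : Fin (2 * k) → Fin N => Function.Injective u),
        ∏ s : Fin (2 * k), (if halfIdx s ∈ S then lam (u s) else 1)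
      = (((2 * S.card).factorial : ℕ) : ℝ) *
          (((N - 2 * S.card).descFactorial (2 * k - 2 * S.card) : ℕ) : ℝ) *
        ∑ A ∈ (Finset.univ : Finset (Fin N)).powersetCard (2 * S.card), ∏ x ∈ A, lam x := by
  classical
  obtain ⟨π, hπ⟩ := exists_slot_perm S
  have hmk : 2 * S.card ≤ 2 * k := by
    have h := Finset.card_le_univ S
    simp only [Finset.card_univ, Fintype.card_fin] at h
    omega
  have reidx : ∑ u ∈ Finset.univ.filter (fun u : Fin (2 * k) → Fin N => Function.Injective u),
        ∏ s : Fin (2 * k), (if halfIdx s ∈ S then lam (u s) else 1)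
      = ∑ u ∈ Finset.univ.filter (fun u : Fin (2 * k) → Fin N => Function.Injective u),
        ∏ s : Fin (2 * k), (if (s : ℕ) < 2 * S.card then lam (u s) else 1) := by
    refine Finset.sum_nbij' (fun u => u ∘ π.symm) (fun u => u ∘ π) ?_ ?_ ?_ ?_ ?_
    · intro u hu
      rw [Finset.mem_filter] at hu ⊢
      exact ⟨Finset.mem_univ _, hu.2.comp π.symm.injective⟩
    · intro u hu
      rw [Finset.mem_filter] at hu ⊢
      exact ⟨Finset.mem_univ _, hu.2.comp π.injective⟩
    · intro u _
      funext x
      simp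
    · intro u _
      funext x
      simp
    · intro u _
      rw [← Equiv.prod_comp π (fun s => if (s : ℕ) < 2 * S.card then lam ((u ∘ π.symm) s) else 1)]
      refine Finset.prod_congr rfl fun s _ => ?_
      rw [if_congr (hπ s).symm rfl rfl]
      simp
  rw [reidx]
  have hf : Finset.univ.filter (fun u : Fin (2 * k) → Fin N => Function.Injective u)
      = Finset.univ.filter (fun u : Fin (2 * k) → Fin N =>
          Function.Injective u ∧ ∀ x, u x ∈ (Finset.univ : Finset (Fin N))) := by
    refine Finset.filter_congr fun u _ => by simp
  rw [hf, injsum lam (2 * k) (2 * S.card) Finset.univ hmk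
    (by simp only [Finset.card_univ, Fintype.card_fin]; exact h2k)]
  simp only [Finset.card_univ, Fintype.card_fin]

lemma natid {N k m : ℕ} (hm : m ≤ k) (hk : 2 * k ≤ N) :
    (2*m).factorial * ((N - 2*m).descFactorial (2*k - 2*m)) * N.choose (2*m)
      = (2*k).factorial * N.choose (2*k) := by
  have h1 := Nat.choose_mul (n := N) (by omega : 2*m ≤ 2*k)
  have h2 := Nat.choose_mul_factorial_mul_factorial (by omega : 2*m ≤ 2*k)
  rw [Nat.descFactorial_eq_factorial_mul_choose]
  have e1 : (2*m).factorial * ((2*k - 2*m).factorial * (N - 2*m).choose (2*k - 2*m)) * N.choose (2*m)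
      = (N.choose (2*m) * (N - 2*m).choose (2*k - 2*m)) * ((2*m).factorial * (2*k - 2*m).factorial) := by
    ring
  rw [e1, ← h1]
  calc N.choose (2*k) * (2*k).choose (2*m) * ((2*m).factorial * (2*k-2*m).factorial)
      = ((2*k).choose (2*m) * (2*m).factorial * (2*k-2*m).factorial) * N.choose (2*k) := by ring
    _ = (2*k).factorial * N.choose (2*k) := by rw [h2]

lemma prod_ite_split {k : ℕ} (S : Finset (Fin k)) (f g : Fin k → ℝ) :
    ∏ a, (if a ∈ S then f a else g a) = (∏ a ∈ S, f a) * ∏ a ∈ Sᶜ, g a := by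
  classical
  rw [← Finset.prod_mul_prod_compl S (fun a => if a ∈ S then f a else g a)]
  congr 1
  · exact Finset.prod_congr rfl fun a ha => by rw [if_pos ha]
  · exact Finset.prod_congr rfl fun a ha => by rw [if_neg (Finset.mem_compl.mp ha)]

end GBAux

open Finset in
/-- **Gauss-Bonnet curvature of a hypersurface in a space form** (Lemma 4.1):
if `h` is a real symmetric matrix with eigenvalues `λ` (counted with multiplicity) and
`R_{i₁i₂}^{j₁j₂}` is built from `h` via the Gauss equation with ambient curvature `ε`, then
`L_k = (1/2^k) δ^{i…}_{j…} R⋯R = C(n-1,2k) (2k)! Σ_{i=0}^k C(k,i) ε^i H_{2k-2i}(λ)`. -/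
theorem stmt_8 (n : ℕ) (hn : 3 ≤ n) (k : ℕ) (hk1 : 1 ≤ k) (hk2 : 2 * k ≤ n - 1)
    (eps : ℝ) (heps : eps = -1 ∨ eps = 0 ∨ eps = 1)
    (h : Matrix (Fin (n - 1)) (Fin (n - 1)) ℝ) (lam : Fin (n - 1) → ℝ)
    (hsym : h.IsSymm)
    (O : Matrix (Fin (n - 1)) (Fin (n - 1)) ℝ)
    (hO : Matrix.transpose O * O = 1)
    (hdiag : h = Matrix.transpose O * Matrix.diagonal lam * O) :
    (1 / 2 ^ k : ℝ) *
      ∑ i : Fin (2 * k) → Fin (n - 1), ∑ j : Fin (2 * k) → Fin (n - 1),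
        genKron i j *
          ∏ a : Fin k,
            (fun i₁ i₂ j₁ j₂ =>
                (h i₁ j₁ * h i₂ j₂ - h i₁ j₂ * h i₂ j₁) +
                  eps * (kdelta i₁ j₁ * kdelta i₂ j₂ - kdelta i₁ j₂ * kdelta i₂ j₁))
              (i ⟨2 * (a : ℕ), by have := a.isLt; omega⟩)
              (i ⟨2 * (a : ℕ) + 1, by have := a.isLt; omega⟩)
              (j ⟨2 * (a : ℕ), by have := a.isLt; omega⟩)
              (j ⟨2 * (a : ℕ) + 1, by have := a.isLt; omega⟩)
      = ((n - 1).choose (2 * k) : ℝ) * ((2 * k).factorial : ℝ) *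
          ∑ i ∈ Finset.range (k + 1),
            (k.choose i : ℝ) * eps ^ i * Hnorm (n - 1) lam (2 * k - 2 * i) := by
  classical
  set Z : (Fin (2*k) → Fin (n-1)) → Fin k → (Fin (2*k) → Fin (n-1)) → ℝ :=
    fun i a j => h (i (pfst a)) (j (pfst a)) * h (i (psnd a)) (j (psnd a)) +
      eps * (kdelta (i (pfst a)) (j (pfst a)) * kdelta (i (psnd a)) (j (psnd a))) with hZdef
  -- Step 0: rewrite the R-product as a product of differences
  have e0 : ∀ i j : Fin (2*k) → Fin (n-1),
      (∏ a : Fin k,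
        (fun i₁ i₂ j₁ j₂ =>
            (h i₁ j₁ * h i₂ j₂ - h i₁ j₂ * h i₂ j₁) +
              eps * (kdelta i₁ j₁ * kdelta i₂ j₂ - kdelta i₁ j₂ * kdelta i₂ j₁))
          (i ⟨2 * (a : ℕ), by have := a.isLt; omega⟩)
          (i ⟨2 * (a : ℕ) + 1, by have := a.isLt; omega⟩)
          (j ⟨2 * (a : ℕ), by have := a.isLt; omega⟩)
          (j ⟨2 * (a : ℕ) + 1, by have := a.isLt; omega⟩))
      = ∏ a : Fin k, (Z i a j - Z i a (j ∘ Equiv.swap (pfst a) (psnd a))) := by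
    intro i j
    refine Finset.prod_congr rfl fun a _ => ?_
    have hc1 : (j ∘ Equiv.swap (pfst a) (psnd a)) (pfst a) = j (psnd a) := by
      simp [Equiv.swap_apply_left]
    have hc2 : (j ∘ Equiv.swap (pfst a) (psnd a)) (psnd a) = j (pfst a) := by
      simp [Equiv.swap_apply_right]
    show (h (i (pfst a)) (j (pfst a)) * h (i (psnd a)) (j (psnd a)) -
            h (i (pfst a)) (j (psnd a)) * h (i (psnd a)) (j (pfst a))) +
          eps * (kdelta (i (pfst a)) (j (pfst a)) * kdelta (i (psnd a)) (j (psnd a)) -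
            kdelta (i (pfst a)) (j (psnd a)) * kdelta (i (psnd a)) (j (pfst a)))
        = Z i a j - Z i a (j ∘ Equiv.swap (pfst a) (psnd a))
    simp only [hZdef, hc1, hc2]
    ring
  -- Step 1: antisymmetrization
  have e1 : ∀ i : Fin (2*k) → Fin (n-1),
      ∑ j : Fin (2*k) → Fin (n-1), genKron i j *
          ∏ a : Fin k, (Z i a j - Z i a (j ∘ Equiv.swap (pfst a) (psnd a)))
        = 2 ^ k * ∑ j : Fin (2*k) → Fin (n-1), genKron i j * ∏ a, Z i a j := by
    intro i
    have hZc : ∀ a (j j' : Fin (2*k) → Fin (n-1)), j (pfst a) = j' (pfst a) →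
        j (psnd a) = j' (psnd a) → Z i a j = Z i a j' := by
      intro a j j' h1 h2
      simp only [hZdef, h1, h2]
    have := antisym i (Z i) hZc Finset.univ
    simpa [Finset.compl_univ] using this
  -- Step 2: binomial expansion of the product of Z's
  have e2 : ∀ i j : Fin (2*k) → Fin (n-1),
      (∏ a, Z i a j) = ∑ S : Finset (Fin k), eps ^ (k - S.card) *
        ∏ s : Fin (2*k),
          (if halfIdx s ∈ S then h else (1 : Matrix (Fin (n-1)) (Fin (n-1)) ℝ)) (i s) (j s) := by
    intro i j
    have e21 : (∏ a, Z i a j) = ∑ S : Finset (Fin k),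
        (∏ a ∈ S, h (i (pfst a)) (j (pfst a)) * h (i (psnd a)) (j (psnd a))) *
          ∏ a ∈ Sᶜ, eps * (kdelta (i (pfst a)) (j (pfst a)) * kdelta (i (psnd a)) (j (psnd a))) :=
      Fintype.prod_add
        (fun a : Fin k => h (i (pfst a)) (j (pfst a)) * h (i (psnd a)) (j (psnd a)))
        (fun a : Fin k => eps * (kdelta (i (pfst a)) (j (pfst a)) * kdelta (i (psnd a)) (j (psnd a))))
    rw [e21]
    refine Finset.sum_congr rfl fun S _ => ?_
    have hps : (∏ s : Fin (2*k),
          (if halfIdx s ∈ S then h else (1 : Matrix (Fin (n-1)) (Fin (n-1)) ℝ)) (i s) (j s))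
        = ∏ a : Fin k, (if a ∈ S
            then h (i (pfst a)) (j (pfst a)) * h (i (psnd a)) (j (psnd a))
            else kdelta (i (pfst a)) (j (pfst a)) * kdelta (i (psnd a)) (j (psnd a))) := by
      rw [prod_pairs (fun s =>
        (if halfIdx s ∈ S then h else (1 : Matrix (Fin (n-1)) (Fin (n-1)) ℝ)) (i s) (j s))]
      refine Finset.prod_congr rfl fun a _ => ?_
      rw [halfIdx_pfst, halfIdx_psnd]
      by_cases ha : a ∈ S
      · simp [ha]
      · simp [ha, Matrix.one_apply, kdelta]
    rw [hps, prod_ite_split S _ _]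
    have hcc : ∏ a ∈ Sᶜ, eps * (kdelta (i (pfst a)) (j (pfst a)) * kdelta (i (psnd a)) (j (psnd a)))
        = eps ^ (k - S.card) *
          ∏ a ∈ Sᶜ, (kdelta (i (pfst a)) (j (pfst a)) * kdelta (i (psnd a)) (j (psnd a))) := by
      rw [Finset.prod_mul_distrib, Finset.prod_const, Finset.card_compl, Fintype.card_fin]
    rw [hcc]
    ring
  -- Step 3: per-S evaluation via diagonalization
  have e3 : ∀ S : Finset (Fin k),
      ∑ i : Fin (2*k) → Fin (n-1), ∑ j : Fin (2*k) → Fin (n-1), genKron i j *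
          ∏ s : Fin (2*k),
            (if halfIdx s ∈ S then h else (1 : Matrix (Fin (n-1)) (Fin (n-1)) ℝ)) (i s) (j s)
        = (((2 * S.card).factorial : ℕ) : ℝ) *
            ((((n-1) - 2 * S.card).descFactorial (2 * k - 2 * S.card) : ℕ) : ℝ) *
            esymmR (n-1) lam (2 * S.card) := by
    intro S
    have hM : ∀ s : Fin (2*k),
        (if halfIdx s ∈ S then h else (1 : Matrix (Fin (n-1)) (Fin (n-1)) ℝ))
          = Matrix.transpose O *
              Matrix.diagonal (if halfIdx s ∈ S then lam else fun _ => (1:ℝ)) * O := by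
      intro s
      by_cases hs : halfIdx s ∈ S
      · rw [if_pos hs, if_pos hs]
        exact hdiag
      · rw [if_neg hs, if_neg hs]
        have hd1 : Matrix.diagonal (fun _ : Fin (n-1) => (1:ℝ)) = 1 := Matrix.diagonal_one
        rw [hd1, Matrix.mul_one, hO]
    have e31 : ∑ i : Fin (2*k) → Fin (n-1), ∑ j : Fin (2*k) → Fin (n-1), genKron i j *
          ∏ s : Fin (2*k),
            (if halfIdx s ∈ S then h else (1 : Matrix (Fin (n-1)) (Fin (n-1)) ℝ)) (i s) (j s)
        = ∑ u : Fin (2*k) → Fin (n-1), genKron u u *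
            ∏ s : Fin (2*k), (if halfIdx s ∈ S then lam else fun _ => (1:ℝ)) (u s) := by
      rw [← master O hO (fun s => if halfIdx s ∈ S then lam else fun _ => (1:ℝ))]
      refine Finset.sum_congr rfl fun i _ => Finset.sum_congr rfl fun j _ => ?_
      congr 1
      refine Finset.prod_congr rfl fun s _ => ?_
      rw [hM s]
    rw [e31]
    have e32 : ∑ u : Fin (2*k) → Fin (n-1), genKron u u *
          ∏ s : Fin (2*k), (if halfIdx s ∈ S then lam else fun _ => (1:ℝ)) (u s)
        = ∑ u ∈ Finset.univ.filter (fun u : Fin (2*k) → Fin (n-1) => Function.Injective u),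
            ∏ s : Fin (2*k), (if halfIdx s ∈ S then lam (u s) else 1) := by
      rw [Finset.sum_filter]
      refine Finset.sum_congr rfl fun u _ => ?_
      rw [genKron_self]
      have hap : ∀ s : Fin (2*k), (if halfIdx s ∈ S then lam else fun _ => (1:ℝ)) (u s)
          = (if halfIdx s ∈ S then lam (u s) else 1) := fun s =>
        apply_ite (fun f : Fin (n-1) → ℝ => f (u s)) _ _ _
      simp_rw [hap]
      by_cases hu : Function.Injective u
      · rw [if_pos hu, if_pos hu, one_mul]
      · rw [if_neg hu, if_neg hu, zero_mul]
    rw [e32, injsum_perm lam S hk2]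
    rfl
  -- Step 4: assemble
  have e4 : (1 / 2 ^ k : ℝ) *
      ∑ i : Fin (2 * k) → Fin (n-1), ∑ j : Fin (2 * k) → Fin (n-1),
        genKron i j *
          ∏ a : Fin k,
            (fun i₁ i₂ j₁ j₂ =>
                (h i₁ j₁ * h i₂ j₂ - h i₁ j₂ * h i₂ j₁) +
                  eps * (kdelta i₁ j₁ * kdelta i₂ j₂ - kdelta i₁ j₂ * kdelta i₂ j₁))
              (i ⟨2 * (a : ℕ), by have := a.isLt; omega⟩)
              (i ⟨2 * (a : ℕ) + 1, by have := a.isLt; omega⟩)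
              (j ⟨2 * (a : ℕ), by have := a.isLt; omega⟩)
              (j ⟨2 * (a : ℕ) + 1, by have := a.isLt; omega⟩)
      = ∑ S : Finset (Fin k), eps ^ (k - S.card) *
          ((((2 * S.card).factorial : ℕ) : ℝ) *
            ((((n-1) - 2 * S.card).descFactorial (2 * k - 2 * S.card) : ℕ) : ℝ) *
            esymmR (n-1) lam (2 * S.card)) := by
    have c1 : ∑ i : Fin (2 * k) → Fin (n-1), ∑ j : Fin (2 * k) → Fin (n-1),
        genKron i j *
          ∏ a : Fin k,
            (fun i₁ i₂ j₁ j₂ =>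
                (h i₁ j₁ * h i₂ j₂ - h i₁ j₂ * h i₂ j₁) +
                  eps * (kdelta i₁ j₁ * kdelta i₂ j₂ - kdelta i₁ j₂ * kdelta i₂ j₁))
              (i ⟨2 * (a : ℕ), by have := a.isLt; omega⟩)
              (i ⟨2 * (a : ℕ) + 1, by have := a.isLt; omega⟩)
              (j ⟨2 * (a : ℕ), by have := a.isLt; omega⟩)
              (j ⟨2 * (a : ℕ) + 1, by have := a.isLt; omega⟩)
        = 2 ^ k * ∑ i : Fin (2*k) → Fin (n-1), ∑ j : Fin (2*k) → Fin (n-1),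
            genKron i j * ∏ a, Z i a j := by
      rw [Finset.mul_sum]
      refine Finset.sum_congr rfl fun i _ => ?_
      rw [← e1 i]
      refine Finset.sum_congr rfl fun j _ => ?_
      rw [e0 i j]
    rw [c1]
    have h2k : (2 : ℝ) ^ k ≠ 0 := by positivity
    rw [← mul_assoc, one_div, inv_mul_cancel₀ h2k, one_mul]
    have c2 : ∑ i : Fin (2*k) → Fin (n-1), ∑ j : Fin (2*k) → Fin (n-1),
        genKron i j * ∏ a, Z i a j
      = ∑ S : Finset (Fin k), eps ^ (k - S.card) *
          ∑ i : Fin (2*k) → Fin (n-1), ∑ j : Fin (2*k) → Fin (n-1), genKron i j *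
            ∏ s : Fin (2*k),
              (if halfIdx s ∈ S then h else (1 : Matrix (Fin (n-1)) (Fin (n-1)) ℝ)) (i s) (j s) := by
      simp_rw [e2, Finset.mul_sum]
      have sw1 : ∀ i : Fin (2*k) → Fin (n-1),
          (∑ j : Fin (2*k) → Fin (n-1), ∑ S : Finset (Fin k),
            genKron i j * (eps ^ (k - S.card) * ∏ s : Fin (2*k),
              (if halfIdx s ∈ S then h else (1 : Matrix (Fin (n-1)) (Fin (n-1)) ℝ)) (i s) (j s)))
          = ∑ S : Finset (Fin k), ∑ j : Fin (2*k) → Fin (n-1),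
            genKron i j * (eps ^ (k - S.card) * ∏ s : Fin (2*k),
              (if halfIdx s ∈ S then h else (1 : Matrix (Fin (n-1)) (Fin (n-1)) ℝ)) (i s) (j s)) :=
        fun i => Finset.sum_comm
      simp_rw [sw1]
      rw [Finset.sum_comm]
      refine Finset.sum_congr rfl fun S _ => ?_
      exact Finset.sum_congr rfl fun i _ => Finset.sum_congr rfl fun j _ => by ring
    rw [c2]
    exact Finset.sum_congr rfl fun S _ => by rw [e3 S]
  -- Step 5: group by cardinality
  have e5 : ∑ S : Finset (Fin k), eps ^ (k - S.card) *
      ((((2 * S.card).factorial : ℕ) : ℝ) *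
        ((((n-1) - 2 * S.card).descFactorial (2 * k - 2 * S.card) : ℕ) : ℝ) *
        esymmR (n-1) lam (2 * S.card))
      = ∑ m ∈ Finset.range (k + 1), (k.choose m : ℝ) * (eps ^ (k - m) *
          ((((2 * m).factorial : ℕ) : ℝ) *
            ((((n-1) - 2 * m).descFactorial (2 * k - 2 * m) : ℕ) : ℝ) *
            esymmR (n-1) lam (2 * m))) := by
    have hps : ∑ S : Finset (Fin k), eps ^ (k - S.card) *
        ((((2 * S.card).factorial : ℕ) : ℝ) *
          ((((n-1) - 2 * S.card).descFactorial (2 * k - 2 * S.card) : ℕ) : ℝ) *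
          esymmR (n-1) lam (2 * S.card))
        = ∑ S ∈ (Finset.univ : Finset (Fin k)).powerset, eps ^ (k - S.card) *
        ((((2 * S.card).factorial : ℕ) : ℝ) *
          ((((n-1) - 2 * S.card).descFactorial (2 * k - 2 * S.card) : ℕ) : ℝ) *
          esymmR (n-1) lam (2 * S.card)) := by
      rw [Finset.powerset_univ]
    rw [hps, Finset.sum_powerset]
    simp only [Finset.card_univ, Fintype.card_fin]
    refine Finset.sum_congr rfl fun m _ => ?_
    rw [Finset.sum_powersetCard m Finset.univ (fun c => eps ^ (k - c) *
        ((((2 * c).factorial : ℕ) : ℝ) *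
          ((((n-1) - 2 * c).descFactorial (2 * k - 2 * c) : ℕ) : ℝ) *
          esymmR (n-1) lam (2 * c)))]
    rw [Finset.card_univ, Fintype.card_fin, nsmul_eq_mul]
  -- Step 6: final numerical identity
  have e6 : ∑ m ∈ Finset.range (k + 1), (k.choose m : ℝ) * (eps ^ (k - m) *
          ((((2 * m).factorial : ℕ) : ℝ) *
            ((((n-1) - 2 * m).descFactorial (2 * k - 2 * m) : ℕ) : ℝ) *
            esymmR (n-1) lam (2 * m)))
      = ((n - 1).choose (2 * k) : ℝ) * ((2 * k).factorial : ℝ) *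
          ∑ i ∈ Finset.range (k + 1),
            (k.choose i : ℝ) * eps ^ i * Hnorm (n - 1) lam (2 * k - 2 * i) := by
    have hRHS : ((n-1).choose (2 * k) : ℝ) * ((2 * k).factorial : ℝ) *
        ∑ i ∈ Finset.range (k + 1),
          (k.choose i : ℝ) * eps ^ i * Hnorm (n-1) lam (2 * k - 2 * i)
      = ∑ i ∈ Finset.range (k + 1), ((n-1).choose (2 * k) : ℝ) * ((2 * k).factorial : ℝ) *
          ((k.choose i : ℝ) * eps ^ i * Hnorm (n-1) lam (2 * k - 2 * i)) := by
      rw [Finset.mul_sum]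
    rw [hRHS]
    conv_rhs => rw [← Finset.sum_range_reflect]
    refine Finset.sum_congr rfl fun m hm => ?_
    have hmk : m ≤ k := by
      have := Finset.mem_range.mp hm
      omega
    have h1 : k + 1 - 1 - m = k - m := by omega
    have h2 : 2 * k - 2 * (k - m) = 2 * m := by omega
    have h3 : k.choose (k - m) = k.choose m := Nat.choose_symm hmk
    rw [h1, h2, h3]
    have hC : (((n-1).choose (2*m) : ℕ) : ℝ) ≠ 0 := by
      have hp : 0 < (n-1).choose (2*m) := Nat.choose_pos (by omega)
      positivity
    have key : (((2*m).factorial : ℕ) : ℝ) * ((((n-1) - 2*m).descFactorial (2*k - 2*m) : ℕ) : ℝ)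
        = (((2*k).factorial : ℕ) : ℝ) * (((n-1).choose (2*k) : ℕ) : ℝ) /
          (((n-1).choose (2*m) : ℕ) : ℝ) := by
      rw [eq_div_iff hC]
      exact_mod_cast natid hmk hk2
    rw [Hnorm, div_eq_mul_inv]
    calc (k.choose m : ℝ) * (eps ^ (k - m) *
          ((((2 * m).factorial : ℕ) : ℝ) *
            ((((n-1) - 2 * m).descFactorial (2 * k - 2 * m) : ℕ) : ℝ) *
            esymmR (n-1) lam (2 * m)))
        = (k.choose m : ℝ) * eps ^ (k - m) *
            (((((2 * m).factorial : ℕ) : ℝ) *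
              ((((n-1) - 2 * m).descFactorial (2 * k - 2 * m) : ℕ) : ℝ)) *
            esymmR (n-1) lam (2 * m)) := by ring
      _ = (k.choose m : ℝ) * eps ^ (k - m) *
            ((((2*k).factorial : ℕ) : ℝ) * (((n-1).choose (2*k) : ℕ) : ℝ) /
              (((n-1).choose (2*m) : ℕ) : ℝ) * esymmR (n-1) lam (2 * m)) := by rw [key]
      _ = ((n-1).choose (2 * k) : ℝ) * ((2 * k).factorial : ℝ) *
            ((k.choose m : ℝ) * eps ^ (k - m) *
              (esymmR (n-1) lam (2 * m) * ((((n-1).choose (2*m) : ℕ) : ℝ))⁻¹)) := by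
          rw [div_eq_mul_inv]
          ring
  exact e4.trans (e5.trans e6)
end

section
/- Let n ≥ 3 and let κ̂ ∈ ℝ^{n−1} satisfy κ̂_p ≥ 0 for all p. For integers s ≥ 0 and t ≥ 0 define X_{s,t}(κ̂) = Σ_{i=0}^{t} 2^i C(t,i) H_{s+t−i}(κ̂). Then for all integers s ≥ 1 and t ≥ 0, X_{s,t}(κ̂)² ≥ X_{s+1,t}(κ̂) · X_{s−1,t}(κ̂). -/
/-- `X_{s,t}(κ̂) = Σ_{i=0}^{t} 2^i C(t,i) H_{s+t−i}(κ̂)`. -/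
noncomputable def Xst (m : ℕ) (x : Fin m → ℝ) (s t : ℕ) : ℝ :=
  ∑ i ∈ Finset.range (t + 1), (2 : ℝ) ^ i * (t.choose i : ℝ) * Hnorm m x (s + t - i)

lemma esymmR_eq_esymm (m k : ℕ) (x : Fin m → ℝ) :
    esymmR m x k = (Finset.univ.val.map x).esymm k :=
  (Finset.esymm_map_val x _ k).symm

lemma esymmR_zero (m : ℕ) (x : Fin m → ℝ) : esymmR m x 0 = 1 := by
  simp [esymmR]

lemma esymmR_nonneg {m k : ℕ} {x : Fin m → ℝ} (hx : ∀ i, 0 ≤ x i) : 0 ≤ esymmR m x k :=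
  Finset.sum_nonneg fun s _ => Finset.prod_nonneg fun i _ => hx i

lemma esymmR_eq_zero_of_lt {m k : ℕ} (x : Fin m → ℝ) (h : m < k) : esymmR m x k = 0 := by
  unfold esymmR
  rw [Finset.powersetCard_eq_empty.2 (by simpa using h), Finset.sum_empty]

lemma esymm_cons (M : Multiset ℝ) (y : ℝ) (k : ℕ) :
    (y ::ₘ M).esymm (k+1) = M.esymm (k+1) + y * M.esymm k := by
  simp [Multiset.esymm, Multiset.powersetCard_cons, Multiset.sum_map_mul_left]

lemma esymmR_snoc (m k : ℕ) (x : Fin m → ℝ) (y : ℝ) :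
    esymmR (m+1) (Fin.snoc x y) (k+1) = esymmR m x (k+1) + y * esymmR m x k := by
  have hmap : (Finset.univ.val.map (Fin.snoc x y : Fin (m+1) → ℝ))
      = y ::ₘ Finset.univ.val.map x := by
    rw [Fin.univ_castSuccEmb, Finset.cons_val, Multiset.map_cons, Fin.snoc_last,
      Finset.map_val, Multiset.map_map]
    congr 1
    apply Multiset.map_congr rfl
    intro a _
    simp [Fin.snoc_castSucc]
  rw [esymmR_eq_esymm, esymmR_eq_esymm, esymmR_eq_esymm, hmap, esymm_cons]

lemma Hnorm_zero (m : ℕ) (x : Fin m → ℝ) : Hnorm m x 0 = 1 := by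
  simp [Hnorm, esymmR_zero]

lemma Hnorm_eq_zero_of_lt {m k : ℕ} (x : Fin m → ℝ) (h : m < k) : Hnorm m x k = 0 := by
  simp [Hnorm, esymmR_eq_zero_of_lt x h]

lemma Hnorm_nonneg {m k : ℕ} {x : Fin m → ℝ} (hx : ∀ i, 0 ≤ x i) : 0 ≤ Hnorm m x k :=
  div_nonneg (esymmR_nonneg hx) (by positivity)

lemma Hnorm_snoc (m k : ℕ) (x : Fin m → ℝ) (y : ℝ) :
    Hnorm (m+1) (Fin.snoc x y) k =
      (((m+1-k : ℕ) : ℝ) * Hnorm m x k + (k : ℝ) * y * Hnorm m x (k-1)) / (m+1) := by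
  have hm1 : ((m:ℝ)+1) ≠ 0 := by positivity
  rcases k with _ | j
  · rw [Hnorm_zero, Hnorm_zero]
    push_cast
    field_simp
    ring
  · rcases lt_or_ge m j with hj | hj
    · -- j > m : everything zero
      rw [Hnorm_eq_zero_of_lt _ (by omega), Hnorm_eq_zero_of_lt x (by omega)]
      simp only [Nat.succ_sub_one, Hnorm_eq_zero_of_lt x hj]
      ring
    rcases eq_or_lt_of_le hj with rfl | hjm
    · -- j = m
      have h1 : Hnorm (j+1) (Fin.snoc x y) (j+1) = y * esymmR j x j := by
        rw [Hnorm, esymmR_snoc, esymmR_eq_zero_of_lt x (by omega), Nat.choose_self]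
        simp
      rw [h1]
      have h2 : (j+1-(j+1) : ℕ) = 0 := by omega
      rw [h2, Nat.succ_sub_one]
      simp only [Hnorm, Nat.choose_self, Nat.cast_one, div_one, Nat.cast_zero, zero_mul]
      push_cast
      field_simp
      ring
    · -- j < m
      have c1 : (0:ℝ) < (m.choose (j+1) : ℝ) := by
        exact_mod_cast Nat.choose_pos (by omega)
      have c2 : (0:ℝ) < (m.choose j : ℝ) := by
        exact_mod_cast Nat.choose_pos (by omega)
      have c3 : (0:ℝ) < ((m+1).choose (j+1) : ℝ) := by
        exact_mod_cast Nat.choose_pos (by omega)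
      have h1 : (m.choose (j+1) : ℝ) * (m+1) = ((m+1).choose (j+1) : ℝ) * ((m - j : ℕ) : ℝ) := by
        have := Nat.choose_mul_succ_eq m (j+1)
        have h' : m + 1 - (j+1) = m - j := by omega
        rw [h'] at this
        exact_mod_cast congrArg (fun z : ℕ => (z : ℝ)) this
      have h2 : ((m:ℝ)+1) * (m.choose j : ℝ) = ((m+1).choose (j+1) : ℝ) * ((j:ℝ)+1) := by
        have := Nat.add_one_mul_choose_eq m j
        exact_mod_cast congrArg (fun z : ℕ => (z : ℝ)) this
      have hsub : (m + 1 - (j+1) : ℕ) = (m - j : ℕ) := by omega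
      have h1' : (m.choose (j+1) : ℝ) * ((m:ℝ)+1)
          = ((m+1).choose (j+1) : ℝ) * ((m:ℝ) - (j:ℝ)) := by
        rw [h1, Nat.cast_sub hj]
      rw [Hnorm, esymmR_snoc, Hnorm, Hnorm, hsub, Nat.succ_sub_one, Nat.cast_sub hj]
      field_simp
      push_cast
      linear_combination esymmR m x (j+1) * (m.choose j : ℝ) * h1' + y * esymmR m x j * (m.choose (j+1) : ℝ) * h2

/-- Nonnegative log-concave sequence with no internal zeros. -/
def IsLC (a : ℕ → ℝ) : Prop :=
  (∀ k, 0 ≤ a k) ∧ (∀ k, a k * a (k+2) ≤ a (k+1)^2) ∧ (∀ k, a k = 0 → a (k+1) = 0)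

lemma IsLC.step2 {a : ℕ → ℝ} (h : IsLC a) (k : ℕ) :
    a k * a (k+3) ≤ a (k+1) * a (k+2) := by
  obtain ⟨h0, hlc, hz⟩ := h
  rcases eq_or_lt_of_le (h0 (k+1)) with h1 | h1
  · have e2 : a (k+2) = 0 := hz _ h1.symm
    have e3 : a (k+3) = 0 := hz _ e2
    rw [e3, ← h1]
    simp
  rcases eq_or_lt_of_le (h0 (k+2)) with h2 | h2
  · have e3 : a (k+3) = 0 := hz _ h2.symm
    rw [e3, ← h2]
    simp
  · have g1 := hlc k
    have g2 := hlc (k+1)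
    have hv : 0 < a (k+1) * a (k+2) := mul_pos h1 h2
    have g3 : (a k * a (k+3)) * (a (k+1) * a (k+2)) ≤ (a (k+1) * a (k+2))^2 := by
      nlinarith [mul_le_mul g1 g2 (mul_nonneg (h0 (k+1)) (h0 (k+3))) (sq_nonneg _)]
    nlinarith [g3, hv, h0 k, h0 (k+3)]

lemma isLC_Hnorm : ∀ (m : ℕ) (x : Fin m → ℝ), (∀ i, 0 ≤ x i) → IsLC (Hnorm m x) := by
  intro m
  induction m with
  | zero =>
    intro x _
    have hval : ∀ k, Hnorm 0 x (k+1) = 0 := fun k => Hnorm_eq_zero_of_lt x (by omega)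
    refine ⟨fun k => ?_, fun k => ?_, fun k hk => ?_⟩
    · cases k with
      | zero => rw [Hnorm_zero]; norm_num
      | succ j => rw [hval]
    · rw [hval]; simp [sq_nonneg]
    · cases k with
      | zero => rw [Hnorm_zero] at hk; norm_num at hk
      | succ j => rw [hval]
  | succ m IH =>
    intro x hx
    set x₀ : Fin m → ℝ := Fin.init x with hx₀def
    set y : ℝ := x (Fin.last m) with hydef
    have hy : 0 ≤ y := hx _
    have hx₀ : ∀ i, 0 ≤ x₀ i := fun i => hx _
    have hsnoc : (Fin.snoc x₀ y : Fin (m+1) → ℝ) = x := Fin.snoc_init_self x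
    obtain ⟨ih0, ihlc, ihz⟩ := IH x₀ hx₀
    set a : ℕ → ℝ := Hnorm m x₀ with hadef
    have hrec : ∀ k, Hnorm (m+1) x k =
        (((m+1-k : ℕ) : ℝ) * a k + (k : ℝ) * y * a (k-1)) / (m+1) := by
      intro k
      rw [← hsnoc, Hnorm_snoc]
    have hm1 : (0:ℝ) < (m:ℝ)+1 := by positivity
    have hzero : ∀ k, m < k → a k = 0 := fun k h => Hnorm_eq_zero_of_lt x₀ h
    refine ⟨fun k => ?_, fun j => ?_, fun k hk => ?_⟩
    · -- nonneg
      rw [hrec]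
      apply div_nonneg _ hm1.le
      have := ih0 k
      have := ih0 (k-1)
      positivity
    · -- log-concavity
      rcases le_or_gt m j with hj | hj
      · -- j ≥ m : H (j+2) = 0
        have h2 : Hnorm (m+1) x (j+2) = 0 := by
          rw [hrec]
          rw [hzero (j+2) (by omega), hzero (j+2-1) (by omega)]
          simp
        rw [h2, mul_zero]
        exact sq_nonneg _
      · -- j < m
        have hLCa : IsLC a := IH x₀ hx₀
        set P : ℝ := ((m-1-j : ℕ) : ℝ) with hP
        have hPn : (0:ℝ) ≤ P := Nat.cast_nonneg _
        have e1 : ((m+1-j : ℕ) : ℝ) = P + 2 := by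
          rw [hP]
          have h' : m+1-j = (m-1-j)+2 := by omega
          rw [h']; push_cast; ring
        have e2 : ((m+1-(j+1) : ℕ) : ℝ) = P + 1 := by
          rw [hP]
          have h' : m+1-(j+1) = (m-1-j)+1 := by omega
          rw [h']; push_cast; ring
        have e3 : ((m+1-(j+2) : ℕ) : ℝ) = P := by
          rw [hP]; congr 1; omega
        have idx1 : (j+1-1 : ℕ) = j := by omega
        have idx2 : (j+2-1 : ℕ) = j+1 := by omega
        rw [hrec j, hrec (j+1), hrec (j+2), e1, e2, e3, idx1, idx2]
        rw [div_mul_div_comm, div_pow]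
        have hden : (0:ℝ) < ((m:ℝ)+1) * ((m:ℝ)+1) := by positivity
        have hden2 : (((m:ℝ)+1))^2 = ((m:ℝ)+1) * ((m:ℝ)+1) := by ring
        rw [hden2, div_le_div_iff₀ hden hden]
        apply mul_le_mul_of_nonneg_right _ hden.le
        have G0 : (0:ℝ) ≤ (a (j+1) - y * a j)^2 := sq_nonneg _
        have G1 : (0:ℝ) ≤ (P+2)*P*(a (j+1)^2 - a j * a (j+2)) :=
          mul_nonneg (mul_nonneg (by positivity) hPn) (sub_nonneg.2 (ihlc j))
        have G2 : (0:ℝ) ≤ (j:ℝ)*P*(y*(a j * a (j+1) - a (j-1) * a (j+2))) := by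
          rcases j with _ | i
          · norm_num
          · show (0:ℝ) ≤ ((i+1 : ℕ):ℝ)*P*(y*(a (i+1) * a (i+2) - a i * a (i+3)))
            exact mul_nonneg (mul_nonneg (by positivity) hPn)
              (mul_nonneg hy (sub_nonneg.2 (hLCa.step2 i)))
        have G3 : (0:ℝ) ≤ (j:ℝ)*((j:ℝ)+2)*(y^2*(a j^2 - a (j-1) * a (j+1))) := by
          rcases j with _ | i
          · norm_num
          · show (0:ℝ) ≤ ((i+1 : ℕ):ℝ)*(((i+1 : ℕ):ℝ)+2)*(y^2*(a (i+1)^2 - a i * a (i+2)))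
            exact mul_nonneg (mul_nonneg (by positivity) (by positivity))
              (mul_nonneg (sq_nonneg y) (sub_nonneg.2 (ihlc i)))
        push_cast
        nlinarith [G0, G1, G2, G3]
    · -- contiguity
      rw [hrec] at hk
      have hnum : ((m+1-k : ℕ) : ℝ) * a k + (k : ℝ) * y * a (k-1) = 0 := by
        field_simp at hk
        exact hk.trans (mul_zero _)
      rcases le_or_gt k m with hkm | hkm
      · have t1 : (0:ℝ) ≤ ((m+1-k : ℕ) : ℝ) * a k := mul_nonneg (by positivity) (ih0 k)
        have t2 : (0:ℝ) ≤ (k : ℝ) * y * a (k-1) :=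
          mul_nonneg (mul_nonneg (by positivity) hy) (ih0 (k-1))
        have hak : ((m+1-k : ℕ) : ℝ) * a k = 0 := by linarith
        have hpos : (0:ℝ) < ((m+1-k : ℕ) : ℝ) := by
          have : 0 < m + 1 - k := by omega
          exact_mod_cast this
        have hak0 : a k = 0 := by
          rcases mul_eq_zero.1 hak with h | h
          · exact absurd h hpos.ne'
          · exact h
        have hak1 : a (k+1) = 0 := ihz k hak0
        rw [hrec]
        have : (k+1-1 : ℕ) = k := by omega
        rw [this, hak1, hak0]
        simp
      · rw [hrec]
        have e1 : a (k+1) = 0 := hzero _ (by omega)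
        have e2 : a (k+1-1) = 0 := hzero _ (by omega)
        rw [e1, e2]
        simp

lemma isLC_step {b : ℕ → ℝ} (hb : IsLC b) : IsLC (fun s => b (s+1) + 2 * b s) := by
  obtain ⟨h0, hlc, hz⟩ := hb
  have hs2 := IsLC.step2 ⟨h0, hlc, hz⟩
  refine ⟨fun k => ?_, fun k => ?_, fun k hk => ?_⟩
  · show (0:ℝ) ≤ b (k+1) + 2 * b k
    have := h0 (k+1); have := h0 k; linarith
  · show (b (k+1) + 2 * b k) * (b (k+3) + 2 * b (k+2)) ≤ (b (k+2) + 2 * b (k+1))^2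
    have A1 : b (k+1) * b (k+3) ≤ b (k+2)^2 := hlc (k+1)
    nlinarith [hlc k, A1, hs2 k, h0 k, h0 (k+1), h0 (k+2), h0 (k+3)]
  · show b (k+2) + 2 * b (k+1) = 0
    have hk' : b (k+1) + 2 * b k = 0 := hk
    have h1 : b (k+1) = 0 := by have := h0 (k+1); have := h0 k; linarith
    have h2 : b (k+2) = 0 := hz _ h1
    rw [h1, h2]; ring

lemma Xst_zero (m : ℕ) (x : Fin m → ℝ) (s : ℕ) : Xst m x s 0 = Hnorm m x s := by
  simp [Xst]

lemma Xst_succ (m : ℕ) (x : Fin m → ℝ) (s t : ℕ) :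
    Xst m x s (t+1) = Xst m x (s+1) t + 2 * Xst m x s t := by
  have key : Xst m x (s+1) t
      = ∑ i ∈ Finset.range (t+1), (2:ℝ)^(i+1) * (t.choose (i+1) : ℝ) * Hnorm m x (s+t-i)
        + Hnorm m x (s+t+1) := by
    unfold Xst
    rw [Finset.sum_range_succ' (fun i => (2:ℝ)^i * (t.choose i : ℝ) * Hnorm m x (s+1+t-i)) t]
    rw [Finset.sum_range_succ (fun i => (2:ℝ)^(i+1) * (t.choose (i+1) : ℝ) * Hnorm m x (s+t-i)) t]
    rw [Nat.choose_succ_self]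
    simp only [Nat.cast_zero, mul_zero, zero_mul, add_zero, Nat.choose_zero_right,
      Nat.cast_one, pow_zero, one_mul, mul_one]
    congr 1
    · apply Finset.sum_congr rfl
      intro i _
      congr 2
      omega
    · congr 1
      omega
  rw [key]
  unfold Xst
  rw [Finset.sum_range_succ' (fun i => (2:ℝ)^i * ((t+1).choose i : ℝ) * Hnorm m x (s+(t+1)-i)) (t+1)]
  rw [Finset.mul_sum, add_right_comm, ← Finset.sum_add_distrib]
  congr 1
  · apply Finset.sum_congr rfl
    intro i _
    have hidx : s+(t+1)-(i+1) = s+t-i := by omega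
    rw [hidx, Nat.choose_succ_succ]
    push_cast
    ring
  · have hidx : s+(t+1)-0 = s+t+1 := by omega
    rw [hidx]
    simp

lemma isLC_Xst (m : ℕ) (x : Fin m → ℝ) (hx : ∀ i, 0 ≤ x i) (t : ℕ) :
    IsLC (fun s => Xst m x s t) := by
  induction t with
  | zero =>
    have h : (fun s => Xst m x s 0) = Hnorm m x := funext fun s => Xst_zero m x s
    rw [h]
    exact isLC_Hnorm m x hx
  | succ t IH =>
    have h : (fun s => Xst m x s (t+1))
        = fun s => (fun u => Xst m x u t) (s+1) + 2 * (fun u => Xst m x u t) s :=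
      funext fun s => Xst_succ m x s t
    rw [h]
    exact isLC_step IH


/-- **Lemma 4.5**: if `κ̂_p ≥ 0` for all `p`, then for all `s ≥ 1` and `t ≥ 0`,
`X_{s,t}² ≥ X_{s+1,t} X_{s−1,t}`. -/
theorem stmt_13 (n : ℕ) (hn : 3 ≤ n) (kaphat : Fin (n - 1) → ℝ)
    (hkap : ∀ p, 0 ≤ kaphat p) :
    ∀ s t : ℕ, 1 ≤ s →
      Xst (n - 1) kaphat (s + 1) t * Xst (n - 1) kaphat (s - 1) t ≤
        Xst (n - 1) kaphat s t ^ 2 := by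
  intro s t hs
  obtain ⟨u, rfl⟩ : ∃ u, s = u + 1 := ⟨s - 1, by omega⟩
  have h : Xst (n-1) kaphat u t * Xst (n-1) kaphat (u+2) t
      ≤ Xst (n-1) kaphat (u+1) t ^ 2 := (isLC_Xst (n-1) kaphat hkap t).2.1 u
  have e : u + 1 - 1 = u := by omega
  have e2 : u + 1 + 1 = u + 2 := by omega
  rw [e, e2, mul_comm]
  exact h
end
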